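/- For every integer k ≥ 4, setting n = ⌈f(k)⌉ where f(k) = 1 + (ln(k²−1) − ln k)/(ln(k−1) − ln(k−2)), one has D(n,j−1) < D(n,j) for every integer j with 2 ≤ j ≤ k, and consequently M_n ≥ k. -/

import Mathlib

namespace PaperStmt

/-- `w : Fin n → V` is a walk of length `n - 1` in the simple graph `G`:
a sequence of `n` vertices in which consecutive vertices are adjacent. -/
def IsWalk {V : Type*} (G : SimpleGraph V) {n : ℕ} (w : Fin n → V) : Prop :=
  ∀ (i : ℕ) (h : i + 1 < n), G.Adj (w ⟨i, Nat.lt_of_succ_lt h⟩) (w ⟨i + 1, h⟩)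

/-- `Y n G` is the number of walks of length `n - 1` in `G` that visit every
vertex of `G` at least once. -/
noncomputable def Y {V : Type*} [Fintype V] (n : ℕ) (G : SimpleGraph V) : ℕ :=
  Nat.card {w : Fin n → V // IsWalk G w ∧ Function.Surjective w}

/-- `D n k = Y n K_k`, where `K_k` is the complete graph on `k` vertices. -/
noncomputable def D (n k : ℕ) : ℕ :=
  Y n (⊤ : SimpleGraph (Fin k))

/-- `M n` is the least `k` in `{0, …, n}` such that `D n k = max_{0 ≤ j ≤ n} D n j`. -/
noncomputable def M (n : ℕ) : ℕ :=
  sInf {k | k ≤ n ∧ D n k = (Finset.range (n + 1)).sup (fun j => D n j)}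

/-- `f x = 1 + (ln(x² − 1) − ln x) / (ln(x − 1) − ln(x − 2))`. -/
noncomputable def f (x : ℝ) : ℝ :=
  1 + (Real.log (x ^ 2 - 1) - Real.log x) / (Real.log (x - 1) - Real.log (x - 2))

open Finset

set_option linter.unusedSectionVars false


def walk_equiv (m n : ℕ) :
    {w : Fin (n+2) → Fin m // IsWalk (⊤ : SimpleGraph (Fin m)) w} ≃
      Σ p : {w : Fin (n+1) → Fin m // IsWalk (⊤ : SimpleGraph (Fin m)) w},
        {v : Fin m // v ≠ p.1 (Fin.last n)} where
  toFun w := ⟨⟨Fin.init w.1, by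
      intro i h
      have h2 : i + 1 < n + 2 := by omega
      have := w.2 i h2
      simpa [Fin.init, Fin.castSucc, Fin.castAdd, Fin.castLE] using this⟩,
    ⟨w.1 (Fin.last (n+1)), by
      have := w.2 n (by omega)
      rw [SimpleGraph.top_adj] at this
      simpa [Fin.init, Fin.last, Fin.castSucc, Fin.castAdd, Fin.castLE] using this.symm⟩⟩
  invFun p := ⟨Fin.snoc p.1.1 p.2.1, by
      intro i h
      rw [SimpleGraph.top_adj]
      rcases lt_or_eq_of_le (Nat.lt_succ_iff.mp h) with h' | h'
      · have := p.1.2 i h'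
        rw [SimpleGraph.top_adj] at this
        have e1 : (⟨i, Nat.lt_of_succ_lt h⟩ : Fin (n+2)) = Fin.castSucc ⟨i, Nat.lt_of_succ_lt h'⟩ := rfl
        have e2 : (⟨i+1, h⟩ : Fin (n+2)) = Fin.castSucc ⟨i+1, h'⟩ := rfl
        rw [e1, e2, Fin.snoc_castSucc, Fin.snoc_castSucc]
        exact this
      · have e1 : (⟨i, Nat.lt_of_succ_lt h⟩ : Fin (n+2)) = Fin.castSucc ⟨i, by omega⟩ := rfl
        have e2 : (⟨i+1, h⟩ : Fin (n+2)) = Fin.last (n+1) := by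
          ext; simpa using h'
        rw [e1, e2, Fin.snoc_castSucc, Fin.snoc_last]
        have : (⟨i, by omega⟩ : Fin (n+1)) = Fin.last n := by ext; simpa using h'
        rw [this]
        exact fun hc => p.2.2 hc.symm⟩
  left_inv w := by
    apply Subtype.ext
    exact Fin.snoc_init_self w.1
  right_inv p := by
    rcases p with ⟨⟨w, hw⟩, ⟨v, hv⟩⟩
    apply Sigma.ext
    · apply Subtype.ext
      simp
    · rw [Subtype.heq_iff_coe_eq]
      · simp
      · intro x
        simp
  
lemma card_walks (m n : ℕ) :
    Nat.card {w : Fin (n+1) → Fin m // IsWalk (⊤ : SimpleGraph (Fin m)) w} = m * (m-1)^n := by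
  induction n with
  | zero =>
    rw [Nat.card_congr (Equiv.subtypeUnivEquiv (fun w => by intro i h; omega))]
    rw [Nat.card_congr (Equiv.funUnique (Fin 1) (Fin m))]
    simp [Nat.card_eq_fintype_card]
  | succ n ih =>
    classical
    rw [Nat.card_congr (walk_equiv m n)]
    haveI : Fintype {w : Fin (n+1) → Fin m // IsWalk (⊤ : SimpleGraph (Fin m)) w} :=
      Fintype.ofFinite _
    rw [Nat.card_eq_fintype_card, Fintype.card_sigma]
    have hfib : ∀ p : {w : Fin (n+1) → Fin m // IsWalk (⊤ : SimpleGraph (Fin m)) w},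
        Fintype.card {v : Fin m // v ≠ p.1 (Fin.last n)} = m - 1 := by
      intro p
      rw [Fintype.card_subtype_compl]
      simp
    rw [Finset.sum_congr rfl (fun p _ => hfib p), Finset.sum_const, Finset.card_univ,
      ← Nat.card_eq_fintype_card, ih]
    ring


noncomputable def pieceEquiv (n j : ℕ) (S : Finset (Fin j)) :
    {w : Fin n → Fin j // IsWalk (⊤ : SimpleGraph (Fin j)) w ∧ Finset.image w Finset.univ = S} ≃
    {w : Fin n → Fin S.card // IsWalk (⊤ : SimpleGraph (Fin S.card)) w ∧ Function.Surjective w} where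
  toFun w := ⟨fun i => S.equivFin ⟨w.1 i, by
      have := Finset.mem_image_of_mem w.1 (Finset.mem_univ i)
      rwa [w.2.2] at this⟩, by
    constructor
    · intro i h
      have h2 := w.2.1 i h
      rw [SimpleGraph.top_adj] at h2 ⊢
      intro hc
      exact h2 (congrArg Subtype.val (S.equivFin.injective hc))
    · intro y
      have hx : (S.equivFin.symm y).1 ∈ Finset.image w.1 Finset.univ := by
        rw [w.2.2]; exact (S.equivFin.symm y).2
      obtain ⟨i, _, hi⟩ := Finset.mem_image.mp hx
      refine ⟨i, ?_⟩
      have hmem : w.1 i ∈ S := by rw [hi]; exact (S.equivFin.symm y).2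
      have h3 : (⟨w.1 i, hmem⟩ : {x // x ∈ S}) = S.equivFin.symm y := Subtype.ext hi
      exact (Equiv.apply_eq_iff_eq_symm_apply _).mpr h3⟩
  invFun w := ⟨fun i => (S.equivFin.symm (w.1 i)).1, by
    constructor
    · intro i h
      have h2 := w.2.1 i h
      rw [SimpleGraph.top_adj] at h2 ⊢
      intro hc
      exact h2 (S.equivFin.symm.injective (Subtype.ext hc))
    · ext x
      simp only [Finset.mem_image, Finset.mem_univ, true_and]
      constructor
      · rintro ⟨i, rfl⟩
        exact (S.equivFin.symm (w.1 i)).2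
      · intro hxS
        obtain ⟨i, hi⟩ := w.2.2 (S.equivFin ⟨x, hxS⟩)
        exact ⟨i, by rw [hi, Equiv.symm_apply_apply]⟩⟩
  left_inv w := by
    apply Subtype.ext
    funext i
    simp
  right_inv w := by
    apply Subtype.ext
    funext i
    simp

lemma card_piece (n j : ℕ) (S : Finset (Fin j)) :
    Nat.card {w : Fin n → Fin j //
      IsWalk (⊤ : SimpleGraph (Fin j)) w ∧ Finset.image w Finset.univ = S} = D n S.card :=
  Nat.card_congr (pieceEquiv n j S)

lemma W_eq (n j : ℕ) :
    Nat.card {w : Fin n → Fin j // IsWalk (⊤ : SimpleGraph (Fin j)) w} =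
      ∑ i ∈ Finset.range (j + 1), j.choose i * D n i := by
  classical
  have E1 : {w : Fin n → Fin j // IsWalk (⊤ : SimpleGraph (Fin j)) w} ≃
      Σ S : Finset (Fin j), {p : {w : Fin n → Fin j // IsWalk (⊤ : SimpleGraph (Fin j)) w} //
        Finset.image p.1 Finset.univ = S} :=
    (Equiv.sigmaFiberEquiv (fun p : {w : Fin n → Fin j // IsWalk (⊤ : SimpleGraph (Fin j)) w} =>
      Finset.image p.1 Finset.univ)).symm
  have E2 : ∀ S : Finset (Fin j),
      {p : {w : Fin n → Fin j // IsWalk (⊤ : SimpleGraph (Fin j)) w} //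
        Finset.image p.1 Finset.univ = S} ≃
      {w : Fin n → Fin j // IsWalk (⊤ : SimpleGraph (Fin j)) w ∧
        Finset.image w Finset.univ = S} := by
    intro S
    exact (Equiv.subtypeSubtypeEquivSubtypeInter (fun w : Fin n → Fin j => IsWalk (⊤ : SimpleGraph (Fin j)) w) (fun w => Finset.image w Finset.univ = S))
  haveI : ∀ S : Finset (Fin j), Fintype {p : {w : Fin n → Fin j // IsWalk (⊤ : SimpleGraph (Fin j)) w} //
        Finset.image p.1 Finset.univ = S} := fun S => Fintype.ofFinite _
  haveI : Fintype {w : Fin n → Fin j // IsWalk (⊤ : SimpleGraph (Fin j)) w} := Fintype.ofFinite _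
  rw [Nat.card_congr E1, Nat.card_eq_fintype_card, Fintype.card_sigma]
  have step : ∀ S : Finset (Fin j),
      Fintype.card {p : {w : Fin n → Fin j // IsWalk (⊤ : SimpleGraph (Fin j)) w} //
        Finset.image p.1 Finset.univ = S} = D n S.card := by
    intro S
    rw [← Nat.card_eq_fintype_card, Nat.card_congr (E2 S), card_piece]
  rw [Finset.sum_congr rfl (fun S _ => step S)]
  rw [← Finset.powerset_univ, Finset.sum_powerset]
  simp only [Finset.card_univ, Fintype.card_fin]
  refine Finset.sum_congr rfl (fun i hi => ?_)
  rw [Finset.sum_congr rfl (fun S hS => ?_), Finset.sum_const, Finset.card_powersetCard,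
    Finset.card_univ, Fintype.card_fin, smul_eq_mul]
  rw [(Finset.mem_powersetCard.mp hS).2]


lemma neg_one_pow_sub (N t : ℕ) (h : t ≤ N) : (-1:ℤ)^(N-t) = (-1)^N * (-1)^t := by
  have h2 : ((-1:ℤ)^t) * ((-1)^t) = 1 := by
    rw [← pow_add]; exact Even.neg_one_pow ⟨t, rfl⟩
  calc (-1:ℤ)^(N-t) = (-1)^(N-t) * (((-1)^t) * ((-1)^t)) := by rw [h2, mul_one]
    _ = ((-1)^(N-t) * (-1)^t) * (-1)^t := by ring
    _ = (-1)^N * (-1)^t := by rw [← pow_add, Nat.sub_add_cancel h]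

lemma binom_inversion (a b : ℕ → ℤ)
    (hb : ∀ j, b j = ∑ i ∈ range (j+1), (j.choose i : ℤ) * a i) (J : ℕ) :
    a J = ∑ i ∈ range (J+1), (-1:ℤ)^(J-i) * (J.choose i : ℤ) * b i := by
  have key : ∀ i ∈ range (J+1), (-1:ℤ)^(J-i) * (J.choose i : ℤ) * b i =
      ∑ l ∈ range (J+1), (-1:ℤ)^(J-i) * (J.choose i : ℤ) * ((i.choose l : ℤ) * a l) := by
    intro i hi
    rw [hb i, Finset.mul_sum]
    refine Finset.sum_subset (Finset.range_subset_range.mpr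
      (Nat.succ_le_succ (Nat.lt_succ_iff.mp (Finset.mem_range.mp hi)))) ?_
    intro l hl1 hl2
    rw [Finset.mem_range] at hl1 hl2
    rw [Nat.choose_eq_zero_of_lt (show i < l by omega)]
    push_cast
    ring
  rw [Finset.sum_congr rfl key, Finset.sum_comm]
  have inner : ∀ l ∈ range (J+1),
      (∑ i ∈ range (J+1), (-1:ℤ)^(J-i) * (J.choose i : ℤ) * ((i.choose l : ℤ) * a l)) =
      (if l = J then a l else 0) := by
    intro l hl
    have hlJ : l ≤ J := Nat.lt_succ_iff.mp (Finset.mem_range.mp hl)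
    rw [← Finset.sum_subset (show Ico l (J+1) ⊆ range (J+1) by
        intro x hx; rw [Finset.mem_range]; exact (Finset.mem_Ico.mp hx).2)
      (by
        intro i _ hi
        rw [Finset.mem_Ico, Finset.mem_range] at *
        have : i < l := by omega
        rw [Nat.choose_eq_zero_of_lt this]
        push_cast; ring)]
    rw [Finset.sum_Ico_eq_sum_range]
    have hJl : J + 1 - l = (J - l) + 1 := by omega
    rw [hJl]
    have term : ∀ t ∈ range (J - l + 1),
        (-1:ℤ)^(J-(l+t)) * (J.choose (l+t) : ℤ) * (((l+t).choose l : ℤ) * a l) =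
        ((J.choose l : ℤ) * a l) * ((-1)^(J-l) * ((-1)^t * ((J-l).choose t : ℤ))) := by
      intro t ht
      have htN : t ≤ J - l := Nat.lt_succ_iff.mp (Finset.mem_range.mp ht)
      have h1 : l + t ≤ J := by omega
      have h2 : J - (l+t) = (J-l) - t := by omega
      have h3 : (J.choose (l+t) : ℤ) * ((l+t).choose l : ℤ) = (J.choose l : ℤ) * ((J-l).choose t : ℤ) := by
        have := Nat.choose_mul (n := J) (Nat.le_add_right l t)
        have h4 : l + t - l = t := by omega
        rw [h4] at this
        exact_mod_cast congrArg (Nat.cast : ℕ → ℤ) this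
      rw [h2, neg_one_pow_sub _ _ htN]
      calc (-1:ℤ)^(J-l) * (-1)^t * (J.choose (l+t) : ℤ) * (((l+t).choose l : ℤ) * a l)
          = ((-1:ℤ)^(J-l) * (-1)^t * a l) * ((J.choose (l+t) : ℤ) * ((l+t).choose l : ℤ)) := by ring
        _ = ((-1:ℤ)^(J-l) * (-1)^t * a l) * ((J.choose l : ℤ) * ((J-l).choose t : ℤ)) := by rw [h3]
        _ = ((J.choose l : ℤ) * a l) * ((-1)^(J-l) * ((-1)^t * ((J-l).choose t : ℤ))) := by ring
    rw [Finset.sum_congr rfl term, ← Finset.mul_sum, ← Finset.mul_sum]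
    rw [Int.alternating_sum_range_choose]
    by_cases hcase : l = J
    · subst hcase
      simp
    · have : J - l ≠ 0 := by omega
      rw [if_neg this, if_neg hcase]
      ring
  rw [Finset.sum_congr rfl inner, Finset.sum_ite_eq' (range (J+1)) J a,
    if_pos (Finset.self_mem_range_succ J)]

lemma alt_nonneg (t : ℕ → ℤ) (h0 : ∀ i, 0 ≤ t i) (hmono : ∀ i, t (i+1) ≤ t i) :
    ∀ d a, 0 ≤ ∑ i ∈ range d, (-1:ℤ)^i * t (a+i) := by
  intro d
  induction d using Nat.strong_induction_on with
  | _ d ih =>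
    match d with
    | 0 => intro a; simp
    | 1 => intro a; simpa using h0 a
    | (d+2) =>
      intro a
      rw [Finset.sum_range_succ', Finset.sum_range_succ']
      have e1 : ∀ i, (-1:ℤ)^(i+1+1) * t (a+(i+1+1)) = (-1)^i * t ((a+2)+i) := by
        intro i
        have : a + (i+1+1) = (a+2)+i := by omega
        rw [this, pow_add, pow_add]
        ring
      rw [Finset.sum_congr rfl (fun i _ => e1 i)]
      have h2 : (0:ℤ) ≤ (-1)^(0+1) * t (a+(0+1)) + (-1)^0 * t (a+0) := by
        have hm := hmono a
        norm_num
        omega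
      have h3 := ih d (by omega) (a+2)
      omega



section Analytic
variable {k n : ℕ} (hk : 4 ≤ k) (hn : (n : ℤ) = ⌈f k⌉)

lemma log_diff_ge (x : ℝ) (hx : 2 ≤ x) : 1/x ≤ Real.log x - Real.log (x-1) := by
  have h1 : (0:ℝ) < x := by linarith
  have h2 : (0:ℝ) < x - 1 := by linarith
  have h3 := Real.log_le_sub_one_of_pos (show (0:ℝ) < (x-1)/x by positivity)
  rw [Real.log_div (by linarith) (by linarith)] at h3
  have : (x-1)/x - 1 = -(1/x) := by field_simp; ring
  rw [this] at h3
  linarith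

lemma log_diff_le (x : ℝ) (hx : 3 ≤ x) : Real.log (x-1) - Real.log (x-2) ≤ 1/(x-2) := by
  have h3 := Real.log_le_sub_one_of_pos (show (0:ℝ) < (x-1)/(x-2) from div_pos (by linarith) (by linarith))
  rw [Real.log_div (by linarith) (by linarith)] at h3
  have h4 : (x-1)/(x-2) - 1 = 1/(x-2) := by
    rw [div_sub_one (by linarith)]
    norm_num
  linarith

include hk hn

lemma R_pos : 0 < Real.log ((k:ℝ)-1) - Real.log ((k:ℝ)-2) := by
  have hK : (4:ℝ) ≤ (k:ℝ) := by exact_mod_cast hk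
  have := Real.log_lt_log (show (0:ℝ) < (k:ℝ)-2 by linarith) (show (k:ℝ)-2 < (k:ℝ)-1 by linarith)
  linarith

lemma L_gt_one : 1 < Real.log ((k:ℝ)^2-1) - Real.log (k:ℝ) := by
  have hK : (4:ℝ) ≤ (k:ℝ) := by exact_mod_cast hk
  have hq : (15/4 : ℝ) ≤ ((k:ℝ)^2-1)/(k:ℝ) := by
    rw [div_le_div_iff₀ (by norm_num) (by linarith)]
    nlinarith
  have h1 : Real.log (15/4) ≤ Real.log (((k:ℝ)^2-1)/(k:ℝ)) :=
    Real.log_le_log (by norm_num) hq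
  have h2 : 1 < Real.log (15/4) := by
    have := Real.exp_one_lt_d9
    have h3 : Real.exp 1 < 15/4 := by linarith
    calc (1:ℝ) = Real.log (Real.exp 1) := (Real.log_exp 1).symm
      _ < Real.log (15/4) := Real.log_lt_log (Real.exp_pos 1) h3
  have hdiv : Real.log (((k:ℝ)^2-1)/(k:ℝ)) = Real.log ((k:ℝ)^2-1) - Real.log (k:ℝ) :=
    Real.log_div (by nlinarith) (by linarith)
  have h2' : 1 < Real.log (((k:ℝ)^2-1)/(k:ℝ)) := lt_of_lt_of_le h2 h1
  linarith

lemma n_ge_k : k ≤ n := by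
  have hK : (4:ℝ) ≤ (k:ℝ) := by exact_mod_cast hk
  have hR := R_pos hk hn
  have hL := L_gt_one hk hn
  have hRle : Real.log ((k:ℝ)-1) - Real.log ((k:ℝ)-2) ≤ 1/((k:ℝ)-2) :=
    log_diff_le _ (by linarith)
  have hfk : ((k:ℤ) - 1 : ℤ) < ⌈f (k:ℝ)⌉ := by
    rw [Int.lt_ceil]
    have : ((k:ℤ) - 1 : ℤ) = ((k:ℝ) - 1 : ℝ) := by push_cast; ring
    rw [show (((k:ℤ) - 1 : ℤ) : ℝ) = (k:ℝ) - 1 by push_cast; ring]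
    unfold f
    have key : ((k:ℝ)-2) * (Real.log ((k:ℝ)-1) - Real.log ((k:ℝ)-2)) <
        Real.log ((k:ℝ)^2-1) - Real.log (k:ℝ) := by
      have : ((k:ℝ)-2) * (Real.log ((k:ℝ)-1) - Real.log ((k:ℝ)-2)) ≤ 1 := by
        have := mul_le_mul_of_nonneg_left hRle (show (0:ℝ) ≤ (k:ℝ)-2 by linarith)
        rw [mul_one_div, div_self (by linarith)] at this
        linarith
      linarith
    have := (lt_div_iff₀ hR).mpr key
    linarith
  rw [← hn] at hfk
  omega

lemma main_bound :
    Real.log ((k:ℝ)^2-1) - Real.log (k:ℝ) ≤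
      ((n:ℝ) - 1) * (Real.log ((k:ℝ)-1) - Real.log ((k:ℝ)-2)) := by
  have hR := R_pos hk hn
  have hfk : f (k:ℝ) ≤ (n:ℝ) := by
    have h1 : (⌈f (k:ℝ)⌉ : ℝ) ≥ f (k:ℝ) := Int.le_ceil _
    rw [← hn] at h1
    exact_mod_cast h1
  unfold f at hfk
  have h2 : (Real.log ((k:ℝ)^2-1) - Real.log (k:ℝ)) / (Real.log ((k:ℝ)-1) - Real.log ((k:ℝ)-2))
      ≤ (n:ℝ) - 1 := by linarith
  calc Real.log ((k:ℝ)^2-1) - Real.log (k:ℝ)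
      = (Real.log ((k:ℝ)^2-1) - Real.log (k:ℝ)) / (Real.log ((k:ℝ)-1) - Real.log ((k:ℝ)-2))
        * (Real.log ((k:ℝ)-1) - Real.log ((k:ℝ)-2)) := by field_simp
    _ ≤ ((n:ℝ) - 1) * (Real.log ((k:ℝ)-1) - Real.log ((k:ℝ)-2)) :=
        mul_le_mul_of_nonneg_right h2 (le_of_lt hR)

lemma np_bound : ((k:ℝ)-2) * Real.log ((k:ℝ)-1) ≤ (n:ℝ) - 1 := by
  have hK : (4:ℝ) ≤ (k:ℝ) := by exact_mod_cast hk
  have hR := R_pos hk hn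
  have hmb := main_bound hk hn
  have hL1 : Real.log ((k:ℝ)-1) ≤ Real.log ((k:ℝ)^2-1) - Real.log (k:ℝ) := by
    have : Real.log ((k:ℝ)-1) + Real.log (k:ℝ) = Real.log (((k:ℝ)-1) * (k:ℝ)) :=
      (Real.log_mul (by linarith) (by linarith)).symm
    have h2 : Real.log (((k:ℝ)-1) * (k:ℝ)) ≤ Real.log ((k:ℝ)^2-1) :=
      Real.log_le_log (by nlinarith) (by nlinarith)
    linarith
  have hRle : Real.log ((k:ℝ)-1) - Real.log ((k:ℝ)-2) ≤ 1/((k:ℝ)-2) :=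
    log_diff_le _ (by linarith)
  have hn1 : (0:ℝ) ≤ (n:ℝ) - 1 := by
    have := n_ge_k hk hn
    have : (4:ℝ) ≤ (n:ℝ) := by
      have h4 : 4 ≤ n := le_trans hk this
      exact_mod_cast h4
    linarith
  have step : Real.log ((k:ℝ)-1) ≤ ((n:ℝ)-1) * (1/((k:ℝ)-2)) := by
    calc Real.log ((k:ℝ)-1) ≤ ((n:ℝ) - 1) * (Real.log ((k:ℝ)-1) - Real.log ((k:ℝ)-2)) :=
          le_trans hL1 hmb
      _ ≤ ((n:ℝ)-1) * (1/((k:ℝ)-2)) := mul_le_mul_of_nonneg_left hRle hn1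
  have h8 := mul_le_mul_of_nonneg_left step (show (0:ℝ) ≤ (k:ℝ)-2 by linarith)
  have h9 : ((k:ℝ)-2) * (((n:ℝ)-1) * (1/((k:ℝ)-2))) = (n:ℝ)-1 := by
    rw [mul_one_div, mul_div_assoc', mul_comm, mul_div_assoc, div_self (show (k:ℝ)-2 ≠ 0 by linarith), mul_one]
  linarith
end Analytic


section
variable {k n : ℕ} (hk : 4 ≤ k) (hnk : k ≤ n)
  (hmb : Real.log ((k:ℝ)^2-1) - Real.log (k:ℝ) ≤
      ((n:ℝ) - 1) * (Real.log ((k:ℝ)-1) - Real.log ((k:ℝ)-2)))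
  (hnp : ((k:ℝ)-2) * Real.log ((k:ℝ)-1) ≤ (n:ℝ) - 1)

lemma log_diff_ge' (x : ℝ) (hx : 2 ≤ x) : 1/x ≤ Real.log x - Real.log (x-1) := by
  have h3 := Real.log_le_sub_one_of_pos (show (0:ℝ) < (x-1)/x from div_pos (by linarith) (by linarith))
  rw [Real.log_div (by linarith) (by linarith)] at h3
  have h4 : (x-1)/x - 1 = -(1/x) := by
    rw [div_sub_one (by linarith), show x-1-x = -1 by ring, neg_div, one_div]
  linarith

include hk hnk hmb hnp

lemma L_ge' : Real.log ((k:ℝ)-1) ≤ Real.log ((k:ℝ)^2-1) - Real.log (k:ℝ) := by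
  have hK : (4:ℝ) ≤ (k:ℝ) := by exact_mod_cast hk
  have h1 : Real.log ((k:ℝ)-1) + Real.log (k:ℝ) = Real.log (((k:ℝ)-1) * (k:ℝ)) :=
    (Real.log_mul (by linarith) (by linarith)).symm
  have h2 : Real.log (((k:ℝ)-1) * (k:ℝ)) ≤ Real.log ((k:ℝ)^2-1) :=
    Real.log_le_log (by nlinarith) (by nlinarith)
  linarith

lemma N2real (m : ℕ) (hm : 2 ≤ m) (hmk : m + 1 ≤ k) :
    Real.log (m:ℝ) ≤ ((n:ℝ)-1) * (Real.log (m:ℝ) - Real.log ((m:ℝ)-1)) := by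
  have hK : (4:ℝ) ≤ (k:ℝ) := by exact_mod_cast hk
  have hM : (2:ℝ) ≤ (m:ℝ) := by exact_mod_cast hm
  have hn1 : (0:ℝ) ≤ (n:ℝ) - 1 := by
    have h4 : (4:ℝ) ≤ (n:ℝ) := by exact_mod_cast le_trans hk hnk
    linarith
  rcases eq_or_lt_of_le hmk with heq | hlt
  · -- m = k - 1
    have hm' : (m:ℝ) = (k:ℝ) - 1 := by
      have : (m:ℝ) + 1 = (k:ℝ) := by exact_mod_cast heq
      linarith
    rw [hm']
    have h1 := L_ge' hk hnk hmb hnp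
    calc Real.log ((k:ℝ)-1) ≤ Real.log ((k:ℝ)^2-1) - Real.log (k:ℝ) := h1
      _ ≤ ((n:ℝ)-1) * (Real.log ((k:ℝ)-1) - Real.log ((k:ℝ)-2)) := hmb
      _ = ((n:ℝ)-1) * (Real.log ((k:ℝ)-1) - Real.log (((k:ℝ)-1)-1)) := by rw [show (k:ℝ)-1-1 = (k:ℝ)-2 by ring]
  · -- m ≤ k - 2
    have hmK : (m:ℝ) ≤ (k:ℝ) - 2 := by
      have : m + 2 ≤ k := hlt
      have : (m:ℝ) + 2 ≤ (k:ℝ) := by exact_mod_cast this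
      linarith
    have hd := log_diff_ge' (m:ℝ) hM
    have hlogm : Real.log (m:ℝ) ≤ Real.log ((k:ℝ)-1) :=
      Real.log_le_log (by linarith) (by linarith)
    have hlognn : 0 ≤ Real.log ((k:ℝ)-1) := Real.log_nonneg (by linarith)
    have c1 : ((k:ℝ)-2) * Real.log ((k:ℝ)-1) * (1/(m:ℝ)) ≤ ((n:ℝ)-1) * (1/(m:ℝ)) :=
      mul_le_mul_of_nonneg_right hnp (by positivity)
    have c2 : Real.log ((k:ℝ)-1) ≤ ((k:ℝ)-2) * Real.log ((k:ℝ)-1) * (1/(m:ℝ)) := by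
      rw [mul_one_div]
      rw [le_div_iff₀ (by linarith : (0:ℝ) < (m:ℝ))]
      nlinarith
    have c3 : ((n:ℝ)-1) * (1/(m:ℝ)) ≤ ((n:ℝ)-1) * (Real.log (m:ℝ) - Real.log ((m:ℝ)-1)) :=
      mul_le_mul_of_nonneg_left hd hn1
    linarith

lemma N2nat (m : ℕ) (hm : 2 ≤ m) (hmk : m + 1 ≤ k) :
    m * (m-1)^(n-1) ≤ m^(n-1) := by
  have hM : (2:ℝ) ≤ (m:ℝ) := by exact_mod_cast hm
  have hE : ((n-1 : ℕ) : ℝ) = (n:ℝ) - 1 := by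
    have : 1 ≤ n := by omega
    rw [Nat.cast_sub this, Nat.cast_one]
  rw [← Nat.cast_le (α := ℝ)]
  push_cast [Nat.cast_sub (show 1 ≤ m by omega)]
  have key : (m:ℝ) * ((m:ℝ)-1)^(n-1 : ℕ) ≤ (m:ℝ)^(n-1 : ℕ) := by
    have hb1 : (0:ℝ) < (m:ℝ)-1 := by linarith
    have hpos1 : (0:ℝ) < (m:ℝ) * ((m:ℝ)-1)^(n-1 : ℕ) :=
      mul_pos (by linarith) (pow_pos hb1 _)
    have hpos2 : (0:ℝ) < (m:ℝ)^(n-1 : ℕ) := pow_pos (by linarith) _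
    rw [← Real.log_le_log_iff hpos1 hpos2]
    rw [Real.log_mul (by linarith) (ne_of_gt (pow_pos hb1 _)), Real.log_pow, Real.log_pow]
    have := N2real hk hnk hmb hnp m hm hmk
    rw [hE]
    linarith
  exact key

lemma N1nat (j : ℕ) (hj : 4 ≤ j) (hjk : j ≤ k) :
    (j+1) * ((j-1) * (j-2)^(n-1)) ≤ j * (j-1)^(n-1) := by
  have hK : (4:ℝ) ≤ (k:ℝ) := by exact_mod_cast hk
  have hJ : (4:ℝ) ≤ (j:ℝ) := by exact_mod_cast hj
  have hJK : (j:ℝ) ≤ (k:ℝ) := by exact_mod_cast hjk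
  have hn1 : (0:ℝ) ≤ (n:ℝ) - 1 := by
    have h4 : (4:ℝ) ≤ (n:ℝ) := by exact_mod_cast le_trans hk hnk
    linarith
  have hE : ((n-1 : ℕ) : ℝ) = (n:ℝ) - 1 := by
    have : 1 ≤ n := by omega
    rw [Nat.cast_sub this, Nat.cast_one]
  rw [← Nat.cast_le (α := ℝ)]
  push_cast [Nat.cast_sub (show 1 ≤ j by omega), Nat.cast_sub (show 2 ≤ j by omega)]
  have hb1 : (0:ℝ) < (j:ℝ)-1 := by linarith
  have hb2 : (0:ℝ) < (j:ℝ)-2 := by linarith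
  have hpos1 : (0:ℝ) < ((j:ℝ)+1) * (((j:ℝ)-1) * ((j:ℝ)-2)^(n-1 : ℕ)) :=
    mul_pos (by linarith) (mul_pos hb1 (pow_pos hb2 _))
  have hpos2 : (0:ℝ) < (j:ℝ) * ((j:ℝ)-1)^(n-1 : ℕ) :=
    mul_pos (by linarith) (pow_pos hb1 _)
  rw [← Real.log_le_log_iff hpos1 hpos2]
  rw [Real.log_mul (by linarith) (ne_of_gt (mul_pos hb1 (pow_pos hb2 _))),
    Real.log_mul (ne_of_gt hb1) (ne_of_gt (pow_pos hb2 _)),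
    Real.log_mul (by linarith) (ne_of_gt (pow_pos hb1 _)), Real.log_pow, Real.log_pow]
  rw [hE]
  -- goal: log(J+1) + (log(J-1) + (n-1) log(J-2)) ≤ log J + (n-1) log(J-1)
  have ha : Real.log ((j:ℝ)+1) + Real.log ((j:ℝ)-1) - Real.log (j:ℝ) ≤
      Real.log ((k:ℝ)^2-1) - Real.log (k:ℝ) := by
    have e1 : Real.log ((j:ℝ)+1) + Real.log ((j:ℝ)-1) = Real.log (((j:ℝ)+1)*((j:ℝ)-1)) :=
      (Real.log_mul (by linarith) (by linarith)).symm
    have e2 : Real.log ((((j:ℝ)+1)*((j:ℝ)-1))/(j:ℝ)) =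
        Real.log (((j:ℝ)+1)*((j:ℝ)-1)) - Real.log (j:ℝ) :=
      Real.log_div (by nlinarith) (by linarith)
    have e3 : Real.log (((k:ℝ)^2-1)/(k:ℝ)) = Real.log ((k:ℝ)^2-1) - Real.log (k:ℝ) :=
      Real.log_div (by nlinarith) (by linarith)
    have e4 : ((((j:ℝ)+1)*((j:ℝ)-1))/(j:ℝ)) ≤ (((k:ℝ)^2-1)/(k:ℝ)) := by
      rw [div_le_div_iff₀ (by linarith) (by linarith)]
      nlinarith [mul_nonneg (show (0:ℝ) ≤ (k:ℝ)-(j:ℝ) by linarith)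
        (show (0:ℝ) ≤ (j:ℝ)*(k:ℝ)+1 by nlinarith)]
    have e5 : Real.log ((((j:ℝ)+1)*((j:ℝ)-1))/(j:ℝ)) ≤ Real.log (((k:ℝ)^2-1)/(k:ℝ)) :=
      Real.log_le_log (div_pos (mul_pos (by linarith) (by linarith)) (by linarith)) e4
    linarith
  have hc : Real.log ((k:ℝ)-1) - Real.log ((k:ℝ)-2) ≤
      Real.log ((j:ℝ)-1) - Real.log ((j:ℝ)-2) := by
    have e1 : Real.log (((k:ℝ)-1)/((k:ℝ)-2)) = Real.log ((k:ℝ)-1) - Real.log ((k:ℝ)-2) :=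
      Real.log_div (by linarith) (by linarith)
    have e2 : Real.log (((j:ℝ)-1)/((j:ℝ)-2)) = Real.log ((j:ℝ)-1) - Real.log ((j:ℝ)-2) :=
      Real.log_div (by linarith) (by linarith)
    have e3 : (((k:ℝ)-1)/((k:ℝ)-2)) ≤ (((j:ℝ)-1)/((j:ℝ)-2)) := by
      rw [div_le_div_iff₀ (by linarith) (by linarith)]
      nlinarith
    have e4 := Real.log_le_log (show (0:ℝ) < ((k:ℝ)-1)/((k:ℝ)-2) from div_pos (by linarith) (by linarith)) e3
    linarith
  have hc' : ((n:ℝ)-1) * (Real.log ((k:ℝ)-1) - Real.log ((k:ℝ)-2)) ≤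
      ((n:ℝ)-1) * (Real.log ((j:ℝ)-1) - Real.log ((j:ℝ)-2)) :=
    mul_le_mul_of_nonneg_left hc hn1
  linarith
end


section Glue
variable {k n : ℕ} (hk : 4 ≤ k) (hnk : k ≤ n)
  (hmb : Real.log ((k:ℝ)^2-1) - Real.log (k:ℝ) ≤
      ((n:ℝ) - 1) * (Real.log ((k:ℝ)-1) - Real.log ((k:ℝ)-2)))
  (hnp : ((k:ℝ)-2) * Real.log ((k:ℝ)-1) ≤ (n:ℝ) - 1)

/-- the generic term of the inclusion-exclusion formula for `D n j`. -/
def tt (n j i : ℕ) : ℕ := j.choose i * ((j-i) * (j-i-1)^(n-1))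

lemma card_walks' (m n : ℕ) (hn1 : 1 ≤ n) :
    Nat.card {w : Fin n → Fin m // IsWalk (⊤ : SimpleGraph (Fin m)) w} = m * (m-1)^(n-1) := by
  obtain ⟨N, rfl⟩ : ∃ N, n = N + 1 := ⟨n-1, by omega⟩
  rw [card_walks m N]
  congr 1

lemma D_le_W (n j : ℕ) :
    D n j ≤ Nat.card {w : Fin n → Fin j // IsWalk (⊤ : SimpleGraph (Fin j)) w} :=
  Nat.card_le_card_of_injective (fun w => ⟨w.1, w.2.1⟩)
    (fun a b h => by
      apply Subtype.ext
      have := congrArg Subtype.val h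
      simpa using this)

lemma D_formula (n : ℕ) (hn1 : 1 ≤ n) (J : ℕ) :
    (D n J : ℤ) = ∑ i ∈ range (J+1), (-1:ℤ)^i * (tt n J i : ℤ) := by
  obtain ⟨N, rfl⟩ : ∃ N, n = N + 1 := ⟨n-1, by omega⟩
  have hb : ∀ j : ℕ, ((j * (j-1)^N : ℕ) : ℤ) =
      ∑ i ∈ range (j+1), (j.choose i : ℤ) * (D (N+1) i : ℤ) := by
    intro j
    rw [← card_walks j N, W_eq (N+1) j]
    push_cast
    rfl
  have hinv := binom_inversion (fun i => (D (N+1) i : ℤ))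
    (fun j => ((j * (j-1)^N : ℕ) : ℤ)) (fun j => hb j) J
  rw [hinv, ← Finset.sum_range_reflect]
  refine Finset.sum_congr rfl ?_
  intro i hi
  have hiJ : i ≤ J := by
    have := Finset.mem_range.mp hi
    omega
  have h1 : J + 1 - 1 - i = J - i := by omega
  have h2 : J - (J - i) = i := by omega
  rw [h1, h2, Nat.choose_symm hiJ]
  unfold tt
  have h3 : (N+1) - 1 = N := rfl
  rw [h3]
  push_cast
  ring

include hk hnk hmb hnp

lemma tt_antitone (j : ℕ) (hjk : j ≤ k) : ∀ i, tt n j (i+1) ≤ tt n j i := by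
  intro i
  unfold tt
  rcases le_or_gt j i with hij | hij
  · rw [Nat.choose_eq_zero_of_lt (by omega), zero_mul]
    exact Nat.zero_le _
  · have hn4 : 4 ≤ n := le_trans hk hnk
    set m := j - i - 1 with hm
    have hji : j - i = m + 1 := by omega
    have hji1 : j - (i+1) = m := by omega
    have hji2 : j - (i+1) - 1 = m - 1 := by omega
    rw [hji, hji1]
    rcases Nat.lt_or_ge m 2 with hm2 | hm2
    · interval_cases m
      · simp
      · have hE : n - 1 ≠ 0 := by omega
        norm_num [zero_pow hE]
    · apply Nat.le_of_mul_le_mul_right _ (show 0 < i+1 by omega)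
      have hmk : m + 1 ≤ k := by omega
      have hN2 := N2nat hk hnk hmb hnp m hm2 hmk
      calc j.choose (i+1) * (m * (m-1)^(n-1)) * (i+1)
          = (j.choose (i+1) * (i+1)) * (m * (m-1)^(n-1)) := by ring
        _ = (j.choose i * (j - i)) * (m * (m-1)^(n-1)) := by rw [Nat.choose_succ_right_eq]
        _ = (j.choose i * (m+1)) * (m * (m-1)^(n-1)) := by rw [hji]
        _ ≤ (j.choose i * (m+1)) * m^(n-1) := Nat.mul_le_mul (Nat.le_refl _) hN2
        _ = j.choose i * ((m+1) * m^(n-1)) * 1 := by ring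
        _ ≤ j.choose i * ((m+1) * m^(n-1)) * (i+1) := Nat.mul_le_mul (Nat.le_refl _) (by omega)

lemma D_lower (j : ℕ) (hj4 : 4 ≤ j) (hjk : j ≤ k) :
    (tt n j 0 : ℤ) - tt n j 1 + tt n j 2 - tt n j 3 ≤ (D n j : ℤ) := by
  have hn4 : 4 ≤ n := le_trans hk hnk
  rw [D_formula n (by omega) j]
  rw [← Finset.sum_range_add_sum_Ico _ (show 4 ≤ j+1 by omega)]
  have h1 : ∑ i ∈ range 4, (-1:ℤ)^i * (tt n j i : ℤ) =
      (tt n j 0 : ℤ) - tt n j 1 + tt n j 2 - tt n j 3 := by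
    rw [show (4:ℕ) = 3+1 from rfl, Finset.sum_range_succ, Finset.sum_range_succ,
      Finset.sum_range_succ, Finset.sum_range_succ, Finset.sum_range_zero]
    ring
  have h2 : 0 ≤ ∑ i ∈ Ico 4 (j+1), (-1:ℤ)^i * (tt n j i : ℤ) := by
    rw [Finset.sum_Ico_eq_sum_range]
    have halt := alt_nonneg (fun i => (tt n j i : ℤ)) (fun i => Int.natCast_nonneg _)
      (fun i => Int.ofNat_le.mpr (tt_antitone hk hnk hmb hnp j hjk i)) (j+1-4) 4
    have e : ∀ i ∈ range (j+1-4), (-1:ℤ)^(4+i) * (tt n j (4+i) : ℤ)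
        = (-1:ℤ)^i * (tt n j (4+i) : ℤ) := by
      intro i _
      rw [pow_add]
      norm_num
    rw [Finset.sum_congr rfl e]
    exact halt
  linarith

lemma D_step (j : ℕ) (hj4 : 4 ≤ j) (hjk : j ≤ k) : D n (j-1) < D n j := by
  have hn4 : 4 ≤ n := le_trans hk hnk
  have ht0 : tt n j 0 = j * (j-1)^(n-1) := by
    unfold tt
    simp
  have ht1 : tt n j 1 = j * ((j-1) * (j-2)^(n-1)) := by
    unfold tt
    rw [Nat.choose_one_right, Nat.sub_sub]
  have hN1 := N1nat hk hnk hmb hnp j hj4 hjk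
  have hDj1 : D n (j-1) ≤ (j-1) * (j-2)^(n-1) := by
    have h := D_le_W n (j-1)
    rw [card_walks' (j-1) n (by omega)] at h
    have e : j - 1 - 1 = j - 2 := by omega
    rwa [e] at h
  have hc1 : tt n j 1 + ((j-1) * (j-2)^(n-1)) ≤ tt n j 0 := by
    rw [ht0, ht1]
    have e : (j+1) * ((j-1) * (j-2)^(n-1)) =
        j * ((j-1) * (j-2)^(n-1)) + (j-1) * (j-2)^(n-1) := by ring
    omega
  have ht23 : tt n j 3 < tt n j 2 := by
    rcases eq_or_lt_of_le hj4 with h4 | h5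
    · subst h4
      have hE : n - 1 ≠ 0 := by omega
      have l3 : tt n 4 3 = 0 := by
        unfold tt
        norm_num [zero_pow hE]
      have l2 : tt n 4 2 = 12 := by
        unfold tt
        norm_num [show (4:ℕ).choose 2 = 6 by decide]
      omega
    · -- j ≥ 5
      have hj5 : 5 ≤ j := h5
      have hm2 : 2 ≤ j - 3 := by omega
      have hmk : (j-3) + 1 ≤ k := by omega
      have hN2 := N2nat hk hnk hmb hnp (j-3) hm2 hmk
      unfold tt
      have e1 : j - 2 - 1 = j - 3 := by omega
      have e2 : j - 3 - 1 = j - 4 := by omega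
      rw [e1, e2]
      have key3 : 3 * (j.choose 3 * ((j-3) * (j-4)^(n-1))) ≤ j.choose 2 * ((j-2) * (j-3)^(n-1)) := by
        calc 3 * (j.choose 3 * ((j-3) * (j-4)^(n-1)))
            = (j.choose 3 * 3) * ((j-3) * (j-4)^(n-1)) := by ring
          _ = (j.choose 2 * (j-2)) * ((j-3) * (j-4)^(n-1)) := by
              rw [show (3:ℕ) = 2+1 from rfl, Nat.choose_succ_right_eq]
          _ ≤ (j.choose 2 * (j-2)) * (j-3)^(n-1) := Nat.mul_le_mul (Nat.le_refl _) hN2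
          _ = j.choose 2 * ((j-2) * (j-3)^(n-1)) := by ring
      have hpos : 0 < j.choose 2 * ((j-2) * (j-3)^(n-1)) := by
        have c1 : 0 < j.choose 2 := Nat.choose_pos (by omega)
        have c2 : 0 < j - 2 := by omega
        have c3 : 0 < (j-3)^(n-1) := Nat.pow_pos (by omega)
        positivity
      omega
  have hlow := D_lower hk hnk hmb hnp j hj4 hjk
  have key : (D n (j-1) : ℤ) < (D n j : ℤ) := by
    have c0 : (tt n j 1 : ℤ) + ((j-1) * (j-2)^(n-1) : ℕ) ≤ (tt n j 0 : ℤ) := by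
      exact_mod_cast hc1
    have c1 : (D n (j-1) : ℤ) ≤ ((j-1) * (j-2)^(n-1) : ℕ) := by exact_mod_cast hDj1
    have c2 : (tt n j 3 : ℤ) < tt n j 2 := by exact_mod_cast ht23
    linarith
  exact_mod_cast key

lemma D_two_pos : 0 < D n 2 := by
  have hn4 : 4 ≤ n := le_trans hk hnk
  have : Nonempty {w : Fin n → Fin 2 // IsWalk (⊤ : SimpleGraph (Fin 2)) w ∧ Function.Surjective w} := by
    refine ⟨⟨fun i => ⟨i.val % 2, by omega⟩, ?_, ?_⟩⟩
    · intro i h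
      rw [SimpleGraph.top_adj]
      intro hc
      have := congrArg Fin.val hc
      simp only at this
      omega
    · intro y
      refine ⟨⟨y.val, by omega⟩, ?_⟩
      ext
      simp only
      omega
  exact Nat.card_pos

lemma D_one_zero : D n 1 = 0 := by
  have hn4 : 4 ≤ n := le_trans hk hnk
  have : IsEmpty {w : Fin n → Fin 1 // IsWalk (⊤ : SimpleGraph (Fin 1)) w ∧ Function.Surjective w} := by
    refine ⟨fun w => ?_⟩
    have h := w.2.1 0 (by omega : 0 + 1 < n)
    rw [SimpleGraph.top_adj] at h
    exact h (Subsingleton.elim _ _)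
  exact Nat.card_of_isEmpty

lemma D_three_step : D n 2 < D n 3 := by
  have hn4 : 4 ≤ n := le_trans hk hnk
  have hD2 : D n 2 ≤ 2 := by
    have h := D_le_W n 2
    rw [card_walks' 2 n (by omega)] at h
    simpa using h
  have hform := D_formula n (by omega) 3
  have ht0 : tt n 3 0 = 3 * 2^(n-1) := by unfold tt; norm_num
  have ht1 : tt n 3 1 = 6 := by unfold tt; norm_num
  have ht2 : tt n 3 2 = 0 := by
    unfold tt
    have hE : n - 1 ≠ 0 := by omega
    norm_num [zero_pow hE]
  have ht3 : tt n 3 3 = 0 := by unfold tt; norm_num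
  have hsum : (D n 3 : ℤ) = 3 * 2^(n-1) - 6 := by
    rw [hform]
    rw [show (3:ℕ)+1 = 4 from rfl, show (4:ℕ) = 3+1 from rfl, Finset.sum_range_succ,
      Finset.sum_range_succ, Finset.sum_range_succ, Finset.sum_range_succ, Finset.sum_range_zero]
    rw [ht0, ht1, ht2, ht3]
    push_cast
    ring
  have hpow : (8:ℤ) ≤ 2^(n-1) := by
    have : (2:ℤ)^3 ≤ 2^(n-1) := pow_le_pow_right₀ (by norm_num) (by omega)
    norm_num at this
    exact this
  have : (D n 2 : ℤ) < (D n 3 : ℤ) := by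
    have c1 : (D n 2 : ℤ) ≤ 2 := by exact_mod_cast hD2
    rw [hsum]
    linarith
  exact_mod_cast this

lemma D_all_steps : ∀ j : ℕ, 2 ≤ j → j ≤ k → D n (j - 1) < D n j := by
  intro j hj2 hjk
  rcases Nat.lt_or_ge j 4 with hj4 | hj4
  · interval_cases j
    · have h1 := D_one_zero hk hnk hmb hnp
      have h2 := D_two_pos hk hnk hmb hnp
      have e : (2:ℕ) - 1 = 1 := by norm_num
      rw [e]
      omega
    · have e : (3:ℕ) - 1 = 2 := by norm_num
      rw [e]
      exact D_three_step hk hnk hmb hnp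
  · exact D_step hk hnk hmb hnp j hj4 hjk

lemma D_zero_zero : D n 0 = 0 := by
  have hn4 : 4 ≤ n := le_trans hk hnk
  have : IsEmpty {w : Fin n → Fin 0 // IsWalk (⊤ : SimpleGraph (Fin 0)) w ∧ Function.Surjective w} :=
    ⟨fun w => (w.1 ⟨0, by omega⟩).elim0⟩
  exact Nat.card_of_isEmpty

lemma D_lt_top : ∀ i < k, D n i < D n k := by
  have chain : ∀ d a, 1 ≤ a → a + d + 1 ≤ k → D n a < D n (a + d + 1) := by
    intro d
    induction d with
    | zero =>
      intro a ha hk'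
      have := D_all_steps hk hnk hmb hnp (a+1) (by omega) (by omega)
      simpa using this
    | succ d ih =>
      intro a ha hk'
      have h1 := ih a ha (by omega)
      have h2 := D_all_steps hk hnk hmb hnp (a+d+2) (by omega) (by omega)
      have e : a + d + 2 - 1 = a + d + 1 := by omega
      rw [e] at h2
      calc D n a < D n (a+d+1) := h1
        _ < D n (a+d+2) := h2
  intro i hik
  rcases Nat.eq_zero_or_pos i with rfl | hi
  · have h1 := D_all_steps hk hnk hmb hnp k (by omega) (le_refl k)
    have h0 := D_zero_zero hk hnk hmb hnp
    omega
  · have e : i + (k - i - 1) + 1 = k := by omega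
    have := chain (k - i - 1) i hi (by omega)
    rwa [e] at this

end Glue

theorem D_strict_upto_k_of_ceil_f (k : ℕ) (hk : 4 ≤ k) (n : ℕ)
    (hn : (n : ℤ) = ⌈f k⌉) :
    (∀ j : ℕ, 2 ≤ j → j ≤ k → D n (j - 1) < D n j) ∧ k ≤ M n := by
  have hnk : k ≤ n := n_ge_k hk hn
  have hmb := main_bound hk hn
  have hnp := np_bound hk hn
  refine ⟨D_all_steps hk hnk hmb hnp, ?_⟩
  have hS : {k' | k' ≤ n ∧ D n k' = (Finset.range (n + 1)).sup (fun j => D n j)}.Nonempty := by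
    obtain ⟨b, hb, hbe⟩ := Finset.exists_mem_eq_sup (Finset.range (n+1))
      Finset.nonempty_range_add_one (fun j => D n j)
    exact ⟨b, by
      constructor
      · have := Finset.mem_range.mp hb
        omega
      · exact hbe.symm⟩
  by_contra hMk
  push_neg at hMk
  have hmem := Nat.sInf_mem hS
  have hb1 : M n ≤ n := hmem.1
  have hb2 : D n (M n) = (Finset.range (n + 1)).sup (fun j => D n j) := hmem.2
  have hlt := D_lt_top hk hnk hmb hnp (M n) hMk
  have hle : D n k ≤ (Finset.range (n + 1)).sup (fun j => D n j) :=
    Finset.le_sup (Finset.mem_range.mpr (by omega))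
  omega

end PaperStmt
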